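/- Let n ≥ 1, let B be a group, let K ⊆ B, and let G = ℤ_n ≀ B be the circular lamplighter group. Then the map g = (a, Φ) ↦ (a, Ψ(g)), where Ψ(a, Φ)(ι) = Φ(a + ι), is a bijection from G onto ℤ_n × fun(ℤ_n, B) which is an isomorphism from the Cayley digraph of G with respect to K̃₊ = {(1, δ₁ᵇ) : b ∈ K} onto the tensor product of the directed cycle C⃗_n with the Cayley circular slider digraph S_K of span n over B; that is, for g, g′ ∈ G with g = (a, Φ) and g′ = (a′, Φ′), there exists b ∈ K with g′ = g·(1, δ₁ᵇ) if and only if a′ = a + 1 and Ψ(g) ↝ Ψ(g′) is an arrow of S_K. -/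

import Mathlib

/-- The group of `B`-valued configurations on `ℤ/nℤ` (pointwise multiplication). -/
abbrev Config (n : ℕ) (B : Type*) := ZMod n → B

/-- The translation automorphism `(TᵃΦ)(x) = Φ(x − a)` of the configuration group. -/
def transAut {n : ℕ} {B : Type*} [Group B] (a : ZMod n) :
    Config n B ≃* Config n B where
  toFun Φ := fun x => Φ (x - a)
  invFun Φ := fun x => Φ (x + a)
  left_inv Φ := funext fun x => by simp
  right_inv Φ := funext fun x => by simp
  map_mul' Φ Ψ := rfl

/-- The action of `ℤ/nℤ` on configurations by translations, as a homomorphism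
into the automorphism group. -/
def transHom (n : ℕ) (B : Type*) [Group B] :
    Multiplicative (ZMod n) →* MulAut (Config n B) where
  toFun a := transAut (Multiplicative.toAdd a)
  map_one' := by
    ext Φ x
    simp [transAut]
  map_mul' a b := by
    ext Φ x
    simp [transAut, sub_sub]

/-- The circular lamplighter group `ℤ_n ≀ B`: the semidirect product of `ℤ/nℤ` acting on
the group of `B`-valued configurations on `ℤ/nℤ` by translations.  An element `g` is a
pair: the lamp configuration `g.left` and the lamplighter position `g.right`, with
multiplication `(Φ₁, a₁)·(Φ₂, a₂) = (Φ₁ · T^{a₁}Φ₂, a₁ + a₂)`. -/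
abbrev Lamp (n : ℕ) (B : Type*) [Group B] :=
  Config n B ⋊[transHom n B] Multiplicative (ZMod n)

/-- The configuration `δ₁ᵇ`: equal to `b` at `1 ∈ ℤ/nℤ` and to the identity elsewhere. -/
def deltaOne {n : ℕ} {B : Type*} [Group B] (b : B) : Config n B :=
  fun x => if x = (1 : ZMod n) then b else 1

/-- The walk-right—switch element `(1, δ₁ᵇ)` of the circular lamplighter group. -/
def gen {n : ℕ} {B : Type*} [Group B] (b : B) : Lamp n B :=
  ⟨deltaOne b, Multiplicative.ofAdd (1 : ZMod n)⟩

/-- `Ψ(a, Φ)(ι) = Φ(a + ι)`: the configuration read off in lamplighter's coordinates. -/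
def Psi {n : ℕ} {B : Type*} [Group B] (g : Lamp n B) : Config n B :=
  fun ι => g.left (Multiplicative.toAdd g.right + ι)


/-- the map `(a, Φ) ↦ (a, Ψ(a, Φ))` is a bijection from `G = ℤ_n ≀ B` onto
`ℤ_n × fun(ℤ_n, B)` which is an isomorphism from the Cayley digraph of `G` with respect to
`K̃₊ = {(1, δ₁ᵇ) : b ∈ K}` onto the tensor product of the directed cycle `C⃗_n` with the
Cayley circular slider digraph `S_K` of span `n` over `B`: there is `b ∈ K` with
`g′ = g·(1, δ₁ᵇ)` iff `a′ = a + 1` and `Ψ(g) ↝ Ψ(g′)` is an arrow of `S_K`. -/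
theorem cayley_of_lamplighter_is_spider_slider (n : ℕ) (hn : 1 ≤ n)
    {B : Type*} [Group B] (K : Set B) :
    Function.Bijective
      (fun g : Lamp n B => (Multiplicative.toAdd g.right, Psi g)) ∧
    ∀ g g' : Lamp n B,
      (∃ b ∈ K, g' = g * gen b) ↔
        (Multiplicative.toAdd g'.right = Multiplicative.toAdd g.right + 1 ∧
          (∀ ι : ZMod n, ι ≠ 0 → Psi g' ι = Psi g (ι + 1)) ∧
          (Psi g 1)⁻¹ * Psi g' 0 ∈ K) := by
  constructor
  · refine Function.bijective_iff_has_inverse.mpr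
      ⟨fun p => ⟨fun x => p.2 (x - p.1), Multiplicative.ofAdd p.1⟩, ?_, ?_⟩
    · intro g
      ext x
      · simp [Psi]
      · rfl
    · intro p
      ext ι
      · rfl
      · simp [Psi]
  · intro g g'
    set a := Multiplicative.toAdd g.right with ha
    constructor
    · rintro ⟨b, hb, rfl⟩
      have hright : Multiplicative.toAdd (g * gen b).right = a + 1 := by
        simp [gen, ha]
      have hleft : ∀ x, (g * gen b).left x = g.left x * deltaOne b (x - a) := by
        intro x; rfl
      refine ⟨hright, ?_, ?_⟩
      · intro ι hι
        simp only [Psi, hright, hleft]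
        have h1 : deltaOne (n := n) b (a + 1 + ι - a) = 1 := by
          simp only [deltaOne]
          rw [if_neg]
          intro h
          apply hι
          linear_combination h
        rw [h1, mul_one]
        ring_nf
        congr 1; rw [ha]; ring
      · simp only [Psi, hright, hleft]
        have h1 : deltaOne (n := n) b (a + 1 + 0 - a) = b := by
          simp [deltaOne]
        rw [h1]
        have h2 : a + 1 + 0 = a + 1 := by ring
        rw [h2, inv_mul_cancel_left]
        exact hb
    · rintro ⟨hright, hmid, hK⟩
      refine ⟨(Psi g 1)⁻¹ * Psi g' 0, hK, ?_⟩
      ext x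
      · show g'.left x = g.left x * deltaOne ((Psi g 1)⁻¹ * Psi g' 0) (x - a)
        by_cases hx : x - a = 1
        · have hx' : x = a + 1 := by linear_combination hx
          have h1 : deltaOne (n := n) ((Psi g 1)⁻¹ * Psi g' 0) (x - a) =
              (Psi g 1)⁻¹ * Psi g' 0 := by
            simp [deltaOne, hx]
          rw [h1]
          simp only [Psi, ← ha, hright]
          rw [hx', add_zero, mul_inv_cancel_left]
        · have h1 : deltaOne (n := n) ((Psi g 1)⁻¹ * Psi g' 0) (x - a) = 1 := by
            simp [deltaOne, hx]
          rw [h1, mul_one]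
          have hι : x - a - 1 ≠ 0 := by
            intro h; apply hx; linear_combination h
          have := hmid (x - a - 1) hι
          simp only [Psi, ← ha, hright] at this
          have e1 : a + 1 + (x - a - 1) = x := by ring
          have e2 : a + (x - a - 1 + 1) = x := by ring
          rwa [e1, e2] at this
      · show g'.right = g.right * Multiplicative.ofAdd 1
        have : Multiplicative.toAdd g'.right = Multiplicative.toAdd (g.right * Multiplicative.ofAdd (1 : ZMod n)) := by
          simpa using hright
        exact Multiplicative.toAdd.injective this
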